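/- Let (F, ξ) : C → D be a monoidal functor between rigid k-linear monoidal categories and let a : V → V^∨∨ be a morphism in C. Then F(ctr_C(a)) = ctr_D((ξ̃_V⁻¹)^∨ ∘ ξ̃_{V^∨} ∘ F(a)), where ctr denotes the categorical trace and both sides are endomorphisms of the unit object of D under the identification F(I) = I. -/

import Mathlib

open CategoryTheory MonoidalCategory Functor.LaxMonoidal Functor.OplaxMonoidal

namespace FSI

variable {C : Type*} [Category C] [MonoidalCategory C] [RightRigidCategory C]
variable {D : Type*} [Category D] [MonoidalCategory D] [RightRigidCategory D]

/-- The adjunction isomorphism `A : C(I, V ⊗ W) → C(V^∨, W)`,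
`A(f) = (ev_V ⊗ W) ∘ Φ⁻¹ ∘ (V^∨ ⊗ f)`. -/
def Amap (V W : C) (f : 𝟙_ C ⟶ V ⊗ W) : Vᘁ ⟶ W :=
  (ρ_ (Vᘁ)).inv ≫ (Vᘁ ◁ f) ≫ (α_ (Vᘁ) V W).inv ≫ (ε_ V (Vᘁ) ▷ W) ≫ (λ_ W).hom

/-- The inverse of the adjunction isomorphism `A`, `A⁻¹(g) = (V ⊗ g) ∘ db_V`. -/
def Ainv (V W : C) (g : Vᘁ ⟶ W) : 𝟙_ C ⟶ V ⊗ W :=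
  η_ V (Vᘁ) ≫ (V ◁ g)

/-- `B : C(V, W) → C(I, W ⊗ V^∨)`, `B(f) = (f ⊗ V^∨) ∘ db_V`. -/
def Bmap (V W : C) (f : V ⟶ W) : 𝟙_ C ⟶ W ⊗ (Vᘁ) :=
  η_ V (Vᘁ) ≫ (f ▷ (Vᘁ))

/-- `T_{V,W} : C(V^∨, W) → C(W^∨, V)`, `T(g) = j_V⁻¹ ∘ g^∨`, defined relative to a chosen
isomorphism `j_V : V ≅ V^∨∨` (a component of a pivotal structure). -/
def Tmap {V W : C} (jV : V ≅ (Vᘁ)ᘁ) (g : Vᘁ ⟶ W) : Wᘁ ⟶ V :=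
  gᘁ ≫ jV.inv

/-- `E_{V,W} = A⁻¹ ∘ T_{V,W} ∘ A : C(I, V ⊗ W) → C(I, W ⊗ V)`. -/
def Emap {V : C} (W : C) (jV : V ≅ (Vᘁ)ᘁ) (f : 𝟙_ C ⟶ V ⊗ W) : 𝟙_ C ⟶ W ⊗ V :=
  Ainv W V (Tmap jV (Amap V W f))

/-- The `n`-fold tensor power with rightmost parenthesization:
`V^⊗0 = I`, `V^⊗(n+1) = V ⊗ V^⊗n`. -/
def pow (V : C) : ℕ → C
  | 0 => 𝟙_ C
  | n + 1 => V ⊗ pow V n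

/-- The coherence isomorphism `Φ^(n+1) : V^⊗n ⊗ V ⟶ V^⊗(n+1)` built from associators
(and unitors). -/
def PhiN (V : C) : ∀ n : ℕ, pow V n ⊗ V ⟶ pow V (n + 1)
  | 0 => (λ_ V).hom ≫ (ρ_ V).inv
  | n + 1 => (α_ V (pow V n) V).hom ≫ (V ◁ PhiN V n)

/-- `E_V^(n+1) = C(I, Φ^(n+1)) ∘ E_{V, V^⊗n} : C(I, V^⊗(n+1)) → C(I, V^⊗(n+1))`.
Here `jj` is the family of components of a pivotal structure. -/
def EN (jj : ∀ X : C, X ≅ (Xᘁ)ᘁ) (V : C) (n : ℕ)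
    (f : 𝟙_ C ⟶ pow V (n + 1)) : 𝟙_ C ⟶ pow V (n + 1) :=
  Emap (pow V n) (jj V) f ≫ PhiN V n

/-- The canonical evaluation exhibiting `Y^∨ ⊗ X^∨` as a dual of `X ⊗ Y`. -/
def tildeEv (X Y : C) : ((Yᘁ) ⊗ (Xᘁ)) ⊗ (X ⊗ Y) ⟶ 𝟙_ C :=
  (α_ (Yᘁ) (Xᘁ) (X ⊗ Y)).hom ≫
    ((Yᘁ) ◁ ((α_ (Xᘁ) X Y).inv ≫ (ε_ X (Xᘁ) ▷ Y) ≫ (λ_ Y).hom)) ≫ ε_ Y (Yᘁ)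

/-- The canonical isomorphism `ζ : Y^∨ ⊗ X^∨ ⟶ (X ⊗ Y)^∨` making the duality functor
monoidal; it is the unique morphism with `ev_{X⊗Y} ∘ (ζ ⊗ (X⊗Y)) = tildeEv`. -/
def zeta (X Y : C) : (Yᘁ) ⊗ (Xᘁ) ⟶ (X ⊗ Y)ᘁ :=
  (ρ_ ((Yᘁ) ⊗ (Xᘁ))).inv ≫ (((Yᘁ) ⊗ (Xᘁ)) ◁ η_ (X ⊗ Y) ((X ⊗ Y)ᘁ)) ≫
    (α_ ((Yᘁ) ⊗ (Xᘁ)) (X ⊗ Y) ((X ⊗ Y)ᘁ)).inv ≫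
      (tildeEv X Y ▷ ((X ⊗ Y)ᘁ)) ≫ (λ_ ((X ⊗ Y)ᘁ)).hom

/-- A pivotal structure on a rigid monoidal category: a monoidal natural isomorphism
`j : Id → (−)^∨∨`. -/
structure Pivotal (C : Type*) [Category C] [MonoidalCategory C] [RightRigidCategory C] where
  j : ∀ X : C, X ≅ (Xᘁ)ᘁ
  naturality : ∀ {X Y : C} (f : X ⟶ Y), f ≫ (j Y).hom = (j X).hom ≫ (fᘁ)ᘁ
  monoidality : ∀ X Y : C,
    ((j X).hom ⊗ₘ (j Y).hom) ≫ zeta (Yᘁ) (Xᘁ) = (j (X ⊗ Y)).hom ≫ (zeta X Y)ᘁ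

/-- The categorical trace `ctr(a) = ev_{V^∨} ∘ (a ⊗ V^∨) ∘ db_V ∈ End(I)` of a morphism
`a : V ⟶ V^∨∨`. -/
def ctr {V : C} (a : V ⟶ (Vᘁ)ᘁ) : 𝟙_ C ⟶ 𝟙_ C :=
  η_ V (Vᘁ) ≫ (a ▷ (Vᘁ)) ≫ ε_ (Vᘁ) ((Vᘁ)ᘁ)

/-- The left pivotal trace `ptr_l(f) = ev_V ∘ (V^∨ ⊗ (f ∘ j_V⁻¹)) ∘ db_{V^∨}`. -/
def ptrl (jj : ∀ X : C, X ≅ (Xᘁ)ᘁ) {V : C} (f : V ⟶ V) : 𝟙_ C ⟶ 𝟙_ C :=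
  η_ (Vᘁ) ((Vᘁ)ᘁ) ≫ ((Vᘁ) ◁ ((jj V).inv ≫ f)) ≫ ε_ V (Vᘁ)

/-- The right pivotal trace `ptr_r(f) = ev_{V^∨} ∘ ((j_V ∘ f) ⊗ V^∨) ∘ db_V`. -/
def ptrr (jj : ∀ X : C, X ≅ (Xᘁ)ᘁ) {V : C} (f : V ⟶ V) : 𝟙_ C ⟶ 𝟙_ C :=
  η_ V (Vᘁ) ≫ ((f ≫ (jj V).hom) ▷ (Vᘁ)) ≫ ε_ (Vᘁ) ((Vᘁ)ᘁ)

/-- A pivotal category is *spherical* if left and right pivotal traces agree. -/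
def Spherical (jj : ∀ X : C, X ≅ (Xᘁ)ᘁ) : Prop :=
  ∀ (V : C) (f : V ⟶ V), ptrl jj f = ptrr jj f

section MonoidalFunctorDefs

variable (F : C ⥤ D) [F.Monoidal]

/-- The evaluation making `F(X^∨)` a dual of `F(X)`:
`ev' = F(ev_X) ∘ ξ` (composed with the unit comparison `F(I) ≅ I`). -/
def evF (X : C) : F.obj (Xᘁ) ⊗ F.obj X ⟶ 𝟙_ D :=
  μ F (Xᘁ) X ≫ F.map (ε_ X (Xᘁ)) ≫ η F

/-- The coevaluation making `F(X^∨)` a dual of `F(X)`: `db' = ξ⁻¹ ∘ F(db_X)`. -/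
def dbF (X : C) : 𝟙_ D ⟶ F.obj X ⊗ F.obj (Xᘁ) :=
  ε F ≫ F.map (η_ X (Xᘁ)) ≫ δ F X (Xᘁ)

/-- The duality transformation `ξ̃ : F(X^∨) ⟶ F(X)^∨` of a monoidal functor between rigid
monoidal categories: the unique (iso)morphism with `ev_{F(X)} ∘ (ξ̃ ⊗ F(X)) = F(ev_X) ∘ ξ`. -/
def xiT (X : C) : F.obj (Xᘁ) ⟶ (F.obj X)ᘁ :=
  (ρ_ (F.obj (Xᘁ))).inv ≫ (F.obj (Xᘁ) ◁ η_ (F.obj X) ((F.obj X)ᘁ)) ≫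
    (α_ (F.obj (Xᘁ)) (F.obj X) ((F.obj X)ᘁ)).inv ≫
      (evF F X ▷ ((F.obj X)ᘁ)) ≫ (λ_ ((F.obj X)ᘁ)).hom

/-- The inverse `ξ̃⁻¹ : F(X)^∨ ⟶ F(X^∨)` of the duality transformation `ξ̃`. -/
def xiTinv (X : C) : (F.obj X)ᘁ ⟶ F.obj (Xᘁ) :=
  (ρ_ ((F.obj X)ᘁ)).inv ≫ ((F.obj X)ᘁ ◁ dbF F X) ≫
    (α_ ((F.obj X)ᘁ) (F.obj X) (F.obj (Xᘁ))).inv ≫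
      (ε_ (F.obj X) ((F.obj X)ᘁ) ▷ F.obj (Xᘁ)) ≫ (λ_ (F.obj (Xᘁ))).hom

/-- A monoidal functor between pivotal monoidal categories *preserves the pivotal
structures* if `ξ̃_{X^∨} ∘ F(j_X) = (ξ̃_X)^∨ ∘ j_{F(X)}` for all `X`. -/
def PreservesPivotal (P : Pivotal C) (Q : Pivotal D) : Prop :=
  ∀ X : C, F.map (P.j X).hom ≫ xiT F (Xᘁ) = (Q.j (F.obj X)).hom ≫ (xiT F X)ᘁ

/-- The coherence isomorphism `ξ^(n) : F(V^⊗n) ⟶ F(V)^⊗n` built from instances of `ξ⁻¹`. -/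
def xiN (V : C) : ∀ n : ℕ, F.obj (pow V n) ⟶ pow (F.obj V) n
  | 0 => η F
  | n + 1 => δ F V (pow V n) ≫ (F.obj V ◁ xiN V n)

end MonoidalFunctorDefs

section Aux

variable {P Y : D}

lemma lemA [HasRightDual Y] (e : P ⊗ Y ⟶ 𝟙_ D) :
    (((ρ_ P).inv ≫ (P ◁ η_ Y (Yᘁ)) ≫ (α_ P Y (Yᘁ)).inv ≫ (e ▷ (Yᘁ)) ≫ (λ_ (Yᘁ)).hom) ▷ Y)
      ≫ ε_ Y (Yᘁ) = e := by
  apply_fun (tensorRightHomEquiv P Y (Yᘁ) (𝟙_ D))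
  rw [tensorRightHomEquiv_whiskerRight_comp_evaluation]
  dsimp [tensorRightHomEquiv]
  simp

lemma lemB [HasRightDual Y] (d : 𝟙_ D ⟶ Y ⊗ P) :
    η_ Y (Yᘁ) ≫ (Y ◁ ((ρ_ (Yᘁ)).inv ≫ ((Yᘁ) ◁ d) ≫ (α_ (Yᘁ) Y P).inv ≫ (ε_ Y (Yᘁ) ▷ P)
      ≫ (λ_ P).hom)) = d := by
  apply_fun (tensorLeftHomEquiv (𝟙_ D) Y (Yᘁ) P).symm
  rw [tensorLeftHomEquiv_symm_coevaluation_comp_whiskerLeft]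
  dsimp [tensorLeftHomEquiv]
  simp

end Aux

/-- Monoidal functors between rigid `k`-linear monoidal categories
preserve categorical traces: `F(ctr_C(a)) = ctr_D((ξ̃_V⁻¹)^∨ ∘ ξ̃_{V^∨} ∘ F(a))`. -/


theorem statement12 (k : Type*) [Field k]
    [Preadditive C] [CategoryTheory.Linear k C]
    [Preadditive D] [CategoryTheory.Linear k D]
    (F : C ⥤ D) [F.Monoidal] {V : C} (a : V ⟶ (Vᘁ)ᘁ) :
    ε F ≫ F.map (ctr a) ≫ η F
      = ctr (F.map a ≫ xiT F (Vᘁ) ≫ (xiTinv F V)ᘁ) := by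
  have hA : (xiT F (Vᘁ) ▷ F.obj (Vᘁ)) ≫ ε_ (F.obj (Vᘁ)) ((F.obj (Vᘁ))ᘁ) = evF F (Vᘁ) :=
    lemA (evF F (Vᘁ))
  have hB : η_ (F.obj V) ((F.obj V)ᘁ) ≫ (F.obj V ◁ xiTinv F V) = dbF F V :=
    lemB (dbF F V)
  calc ε F ≫ F.map (ctr a) ≫ η F
      = dbF F V ≫ (F.map a ▷ F.obj (Vᘁ)) ≫ evF F (Vᘁ) := by
        simp [ctr, dbF, evF, F.map_comp, Functor.OplaxMonoidal.δ_natural_left_assoc]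
    _ = ctr (F.map a ≫ xiT F (Vᘁ) ≫ (xiTinv F V)ᘁ) := by
        rw [← hA, ← hB]
        simp only [ctr, comp_whiskerRight, Category.assoc,
          rightAdjointMate_comp_evaluation]
        rw [← whisker_exchange_assoc, ← whisker_exchange_assoc]

end FSI
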